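/- Let 𝒢 be a groupoid and ω a normalized U(1)-valued 3-cocycle on 𝒢. Then the transgression t(ω), defined on composable pairs of morphisms of the loop groupoid Λ𝒢 by t(ω)(g → a, a⁻¹ga → b) := ω(g,a,b) · ω(a,b,(ab)⁻¹g(ab)) · ω(a, a⁻¹ga, b)⁻¹, is a normalized U(1)-valued 2-cocycle on Λ𝒢: for every g ∈ End_𝒢(X) and composable a : X → Y, b : Y → Z, c : Z → W one has t(ω)(a⁻¹ga → b, (ab)⁻¹g(ab) → c) · t(ω)(g → a, a⁻¹ga → bc) = t(ω)(g → ab, (ab)⁻¹g(ab) → c) · t(ω)(g → a, a⁻¹ga → b), and t(ω)(g → a, a⁻¹ga → b) = 1 whenever a or b is an identity morphism. -/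

import Mathlib

open CategoryTheory

/-- A normalized `U(1)`-valued 3-cocycle on a groupoid `G`. -/
structure ThreeCocycle (G : Type) [Groupoid.{0} G] : Type where
  toFun : ∀ {X Y Z W : G}, (X ⟶ Y) → (Y ⟶ Z) → (Z ⟶ W) → ℂ
  abs_toFun : ∀ {X Y Z W : G} (f : X ⟶ Y) (g : Y ⟶ Z) (h : Z ⟶ W),
    ‖toFun f g h‖ = 1
  cocycle : ∀ {X₀ X₁ X₂ X₃ X₄ : G} (f : X₀ ⟶ X₁) (g : X₁ ⟶ X₂) (h : X₂ ⟶ X₃) (k : X₃ ⟶ X₄),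
    toFun g h k * toFun f (g ≫ h) k * toFun f g h
      = toFun (f ≫ g) h k * toFun f g (h ≫ k)
  id_fst : ∀ {X Y Z : G} (g : X ⟶ Y) (h : Y ⟶ Z), toFun (𝟙 X) g h = 1
  id_snd : ∀ {X Y Z : G} (g : X ⟶ Y) (h : Y ⟶ Z), toFun g (𝟙 Y) h = 1
  id_thd : ∀ {X Y Z : G} (g : X ⟶ Y) (h : Y ⟶ Z), toFun g h (𝟙 Z) = 1

/-- Conjugation `a⁻¹ g a` of a loop `g ∈ End(X)` by a morphism `a : X ⟶ Y`. -/
def cnj {G : Type} [Groupoid.{0} G] {X Y : G} (g : X ⟶ X) (a : X ⟶ Y) : Y ⟶ Y :=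
  Groupoid.inv a ≫ g ≫ a

lemma cnj_comp {G : Type} [Groupoid.{0} G] {X Y Z : G} (g : X ⟶ X) (a : X ⟶ Y) (b : Y ⟶ Z) :
    cnj g (a ≫ b) = cnj (cnj g a) b := by
  simp [cnj, Groupoid.inv_eq_inv]

lemma cnj_swap {G : Type} [Groupoid.{0} G] {X Y : G} (g : X ⟶ X) (a : X ⟶ Y) :
    g ≫ a = a ≫ cnj g a := by
  simp [cnj, Groupoid.inv_eq_inv]

/-- `γ_a(g₁,g₂) = ω(g₁,g₂,a) ω(a, a⁻¹g₁a, a⁻¹g₂a) ω(g₁, a, a⁻¹g₂a)⁻¹`. -/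
noncomputable def gam {G : Type} [Groupoid.{0} G] (ω : ThreeCocycle G)
    {X Y : G} (a : X ⟶ Y) (g₁ g₂ : X ⟶ X) : ℂ :=
  ω.toFun g₁ g₂ a * ω.toFun a (cnj g₁ a) (cnj g₂ a) * (ω.toFun g₁ a (cnj g₂ a))⁻¹

/-- The `S¹`-transgression `t(ω)` of a 3-cocycle `ω`, evaluated on the composable pair
`(g → a, a⁻¹ga → b)` of morphisms of the loop groupoid `Λ𝒢`:
`t(ω)(g → a, a⁻¹ga → b) = ω(g,a,b) ω(a,b,(ab)⁻¹g(ab)) ω(a, a⁻¹ga, b)⁻¹`. -/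
noncomputable def tOmega {G : Type} [Groupoid.{0} G] (ω : ThreeCocycle G)
    {X Y Z : G} (g : X ⟶ X) (a : X ⟶ Y) (b : Y ⟶ Z) : ℂ :=
  ω.toFun g a b * ω.toFun a b (cnj g (a ≫ b)) * (ω.toFun a (cnj g a) b)⁻¹

/-- The transgression `t(ω)` of a normalized 3-cocycle `ω` on a groupoid
`𝒢` is a normalized 2-cocycle on the loop groupoid `Λ𝒢`. -/
theorem tOmega_twoCocycle
    (G : Type) [Groupoid.{0} G] (ω : ThreeCocycle G) :
    (∀ (X Y Z W : G) (g : X ⟶ X) (a : X ⟶ Y) (b : Y ⟶ Z) (c : Z ⟶ W),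
      tOmega ω (cnj g a) b c * tOmega ω g a (b ≫ c)
        = tOmega ω g (a ≫ b) c * tOmega ω g a b) ∧
    (∀ (X Y : G) (g : X ⟶ X) (b : X ⟶ Y), tOmega ω g (𝟙 X) b = 1) ∧
    (∀ (X Y : G) (g : X ⟶ X) (a : X ⟶ Y), tOmega ω g a (𝟙 Y) = 1) := by
  
  have hnz : ∀ {X Y Z W : G} (f : X ⟶ Y) (g : Y ⟶ Z) (h : Z ⟶ W), ω.toFun f g h ≠ 0 := by
    intro X Y Z W f g h h0
    have := ω.abs_toFun f g h
    rw [h0] at this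
    simp at this
  refine ⟨?_, ?_, ?_⟩
  · intro X Y Z W g a b c
    have P1 := ω.cocycle g a b c
    have P2 := ω.cocycle a (cnj g a) b c
    have P3 := ω.cocycle a b (cnj g (a ≫ b)) c
    have P4 := ω.cocycle a b c (cnj g (a ≫ b ≫ c))
    simp only [cnj_swap, ← cnj_comp, Category.assoc] at P1 P2 P3 P4
    simp only [tOmega, ← cnj_comp, Category.assoc]
    set G3 := cnj g (a ≫ b ≫ c) with hG3
    set G2 := cnj g (a ≫ b) with hG2
    set ga := cnj g a with hga
    have key :
        (ω.toFun ga b c * ω.toFun b c G3 * ω.toFun g a (b ≫ c) * ω.toFun a (b ≫ c) G3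
            * ω.toFun (a ≫ b) G2 c * ω.toFun a ga b)
          * (ω.toFun a (b ≫ G2) c * ω.toFun a b c)
        = (ω.toFun g (a ≫ b) c * ω.toFun (a ≫ b) c G3 * ω.toFun g a b * ω.toFun a b G2
            * ω.toFun b G2 c * ω.toFun a ga (b ≫ c))
          * (ω.toFun a (b ≫ G2) c * ω.toFun a b c) := by
      linear_combination
        (ω.toFun b c G3 * ω.toFun a (b ≫ c) G3 * ω.toFun a b c
          * ω.toFun g a (b ≫ c) * ω.toFun (a ≫ b) G2 c) * P2
        + (ω.toFun (a ≫ ga) b c * ω.toFun a ga (b ≫ c)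
          * ω.toFun g a (b ≫ c) * ω.toFun (a ≫ b) G2 c) * P4
        - (ω.toFun a ga (b ≫ c) * ω.toFun (a ≫ b) c G3 * ω.toFun a b (c ≫ G3)
          * ω.toFun (a ≫ b) G2 c) * P1
        - (ω.toFun a b c * ω.toFun g (a ≫ b) c * ω.toFun g a b
          * ω.toFun a ga (b ≫ c) * ω.toFun (a ≫ b) c G3) * P3
    have hE : ω.toFun a (b ≫ G2) c * ω.toFun a b c ≠ 0 :=
      mul_ne_zero (hnz _ _ _) (hnz _ _ _)
    have key2 := mul_right_cancel₀ hE key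
    field_simp [hnz b G2 c, hnz a ga (b ≫ c), hnz (a ≫ b) G2 c, hnz a ga b]
    linear_combination key2
  · intro X Y g b
    simp [tOmega, ω.id_fst, ω.id_snd, ω.id_thd]
  · intro X Y g a
    simp [tOmega, ω.id_fst, ω.id_snd, ω.id_thd]
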